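/- Suppose α(q) = −(1/2)Λq with Λ constant, invertible and antisymmetric, the Runge–Kutta matrix A = (a_{ij}) is invertible, the coefficients satisfy b_i a_{ij} + b_j a_{ji} = b_i b_j for all i,j, and p = −(1/2)Λq. Then the Runge–Kutta scheme is a Poisson integrator for the Poisson system q̇ = Λ^{-1}∇H(q) with constant structure matrix Λ^{-1}: the induced one-step map F_h: q ↦ q̄ (defined for h small enough to be differentiable) satisfies DF_h(q) Λ^{-1} DF_h(q)ᵀ = Λ^{-1}. -/

import Mathlib

open Matrix

/-- The Jacobian matrix `(Df)_{μν} = ∂f_μ/∂q^ν` of a map `f : ℝ^n → ℝ^n`. -/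
noncomputable def jac {n : ℕ} (f : (Fin n → ℝ) → (Fin n → ℝ)) (q : Fin n → ℝ) :
    Matrix (Fin n) (Fin n) ℝ :=
  fun μ ν => fderiv ℝ f q (Pi.single ν 1) μ

/-- The gradient `∇H` of a function `H : ℝ^n → ℝ`. -/
noncomputable def grad {n : ℕ} (H : (Fin n → ℝ) → ℝ) (q : Fin n → ℝ) : Fin n → ℝ :=
  fun μ => fderiv ℝ H q (Pi.single μ 1)

lemma jac_eq {n : ℕ} (f : (Fin n → ℝ) → (Fin n → ℝ)) (q : Fin n → ℝ) :
    jac f q = LinearMap.toMatrix' ((fderiv ℝ f q) : (Fin n → ℝ) →ₗ[ℝ] (Fin n → ℝ)) := by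
  ext μ ν
  rw [LinearMap.toMatrix'_apply]
  simp only [jac, ContinuousLinearMap.coe_coe]

lemma jac_comp {n : ℕ} (f g : (Fin n → ℝ) → (Fin n → ℝ)) (q : Fin n → ℝ)
    (hf : DifferentiableAt ℝ f (g q)) (hg : DifferentiableAt ℝ g q) :
    jac (fun x => f (g x)) q = jac f (g q) * jac g q := by
  rw [jac_eq, jac_eq, jac_eq, ← LinearMap.toMatrix'_comp]
  congr 1
  have : (fun x => f (g x)) = f ∘ g := rfl
  rw [this, fderiv_comp q hf hg]
  rfl

lemma jac_add {n : ℕ} (f g : (Fin n → ℝ) → (Fin n → ℝ)) (q : Fin n → ℝ)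
    (hf : DifferentiableAt ℝ f q) (hg : DifferentiableAt ℝ g q) :
    jac (fun x => f x + g x) q = jac f q + jac g q := by
  rw [jac_eq, jac_eq, jac_eq]
  rw [fderiv_fun_add hf hg]
  rfl

lemma jac_smul {n : ℕ} (c : ℝ) (f : (Fin n → ℝ) → (Fin n → ℝ)) (q : Fin n → ℝ)
    (hf : DifferentiableAt ℝ f q) :
    jac (fun x => c • f x) q = c • jac f q := by
  rw [jac_eq, jac_eq, fderiv_fun_const_smul hf c]
  rfl

lemma jac_id {n : ℕ} (q : Fin n → ℝ) : jac (fun x : Fin n → ℝ => x) q = 1 := by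
  rw [jac_eq]
  have : fderiv ℝ (fun x : Fin n → ℝ => x) q = ContinuousLinearMap.id ℝ _ := fderiv_id'
  rw [this]
  exact LinearMap.toMatrix'_id

lemma jac_sum {n s : ℕ} (f : Fin s → (Fin n → ℝ) → (Fin n → ℝ)) (q : Fin n → ℝ)
    (hf : ∀ i, DifferentiableAt ℝ (f i) q) :
    jac (fun x => ∑ i, f i x) q = ∑ i, jac (f i) q := by
  simp only [jac_eq]
  rw [fderiv_fun_sum (fun i _ => hf i)]
  push_cast [ContinuousLinearMap.coe_sum]
  rw [map_sum]

lemma jac_mulVec {n : ℕ} (Λ : Matrix (Fin n) (Fin n) ℝ) (f : (Fin n → ℝ) → (Fin n → ℝ))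
    (q : Fin n → ℝ) (hf : DifferentiableAt ℝ f q) :
    jac (fun x => Λ *ᵥ f x) q = Λ * jac f q := by
  have hL : DifferentiableAt ℝ (fun v : Fin n → ℝ => Λ *ᵥ v) (f q) :=
    (Matrix.mulVecLin Λ).toContinuousLinearMap.differentiableAt
  rw [jac_comp (fun v => Λ *ᵥ v) f q hL hf]
  congr 1
  rw [jac_eq]
  have : fderiv ℝ (fun v : Fin n → ℝ => Λ *ᵥ v) (f q)
      = (Matrix.mulVecLin Λ).toContinuousLinearMap := by
    exact (Matrix.mulVecLin Λ).toContinuousLinearMap.fderiv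
  rw [this]
  have h2 : ((Matrix.mulVecLin Λ).toContinuousLinearMap :
      (Fin n → ℝ) →ₗ[ℝ] (Fin n → ℝ)) = Matrix.mulVecLin Λ := rfl
  rw [h2, ← Matrix.toLin'_apply' Λ, LinearMap.toMatrix'_toLin']

lemma grad_comp_apply {n : ℕ} (H : (Fin n → ℝ) → ℝ) (μ : Fin n) :
    (fun q => grad H q μ)
      = fun q => (ContinuousLinearMap.apply ℝ ℝ (Pi.single μ 1 : Fin n → ℝ)) (fderiv ℝ H q) := by
  rfl

lemma grad_differentiable {n : ℕ} (H : (Fin n → ℝ) → ℝ) (hH : ContDiff ℝ (⊤ : ℕ∞) H) :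
    Differentiable ℝ (grad H) := by
  have hf : Differentiable ℝ (fderiv ℝ H) :=
    (hH.fderiv_right (m := 1) (by exact WithTop.coe_le_coe.mpr le_top)).differentiable one_ne_zero
  apply differentiable_pi.2
  intro μ
  rw [grad_comp_apply]
  exact ((ContinuousLinearMap.apply ℝ ℝ (Pi.single μ 1 : Fin n → ℝ)).differentiable).comp hf

lemma jac_grad_eq {n : ℕ} (H : (Fin n → ℝ) → ℝ) (hH : ContDiff ℝ (⊤ : ℕ∞) H)
    (x : Fin n → ℝ) (μ ν : Fin n) :
    jac (grad H) x μ ν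
      = fderiv ℝ (fderiv ℝ H) x (Pi.single ν 1) (Pi.single μ 1) := by
  have hf : Differentiable ℝ (fderiv ℝ H) :=
    (hH.fderiv_right (m := 1) (by exact WithTop.coe_le_coe.mpr le_top)).differentiable one_ne_zero
  have hdiff : ∀ κ : Fin n, DifferentiableAt ℝ (fun q => grad H q κ) x := by
    intro κ
    rw [grad_comp_apply]
    exact ((ContinuousLinearMap.apply ℝ ℝ (Pi.single κ 1 : Fin n → ℝ)).differentiable.comp
      hf) x
  have h1 : jac (grad H) x μ ν = fderiv ℝ (fun q => grad H q μ) x (Pi.single ν 1) := by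
    simp only [jac]
    rw [show (grad H) = (fun q κ => grad H q κ) from rfl, fderiv_pi hdiff]
    rfl
  rw [h1, grad_comp_apply]
  rw [show (fun q => (ContinuousLinearMap.apply ℝ ℝ (Pi.single μ 1 : Fin n → ℝ))
      (fderiv ℝ H q))
      = (ContinuousLinearMap.apply ℝ ℝ (Pi.single μ 1 : Fin n → ℝ)) ∘ (fderiv ℝ H) from rfl]
  rw [fderiv_comp x (ContinuousLinearMap.apply ℝ ℝ
    (Pi.single μ 1 : Fin n → ℝ)).differentiableAt (hf x)]
  simp

lemma hess_symm {n : ℕ} (H : (Fin n → ℝ) → ℝ) (hH : ContDiff ℝ (⊤ : ℕ∞) H)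
    (x : Fin n → ℝ) : (jac (grad H) x)ᵀ = jac (grad H) x := by
  ext μ ν
  rw [transpose_apply, jac_grad_eq H hH, jac_grad_eq H hH]
  exact second_derivative_symmetric
    (fun y => ((hH.differentiable (by norm_num)) y).hasFDerivAt)
    (((hH.fderiv_right (m := 1) (by exact WithTop.coe_le_coe.mpr le_top)).differentiable one_ne_zero x).hasFDerivAt) _ _

lemma flip_symplectic {n : ℕ} (Λ M : Matrix (Fin n) (Fin n) ℝ) (hΛ : IsUnit Λ.det)
    (hM : Mᵀ * Λ * M = Λ) : M * Λ⁻¹ * Mᵀ = Λ⁻¹ := by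
  have hdet : Λ.det * (M.det * M.det) = Λ.det * 1 := by
    have := congrArg Matrix.det hM
    rw [det_mul, det_mul, det_transpose] at this
    linear_combination this
  have hMdet : IsUnit M.det := IsUnit.of_mul_eq_one _ (hΛ.mul_left_cancel hdet)
  have hMtdet : IsUnit Mᵀ.det := by rwa [det_transpose]
  have hinv : Λ⁻¹ = M⁻¹ * (Λ⁻¹ * Mᵀ⁻¹) := by
    calc Λ⁻¹ = (Mᵀ * Λ * M)⁻¹ := by rw [hM]
    _ = M⁻¹ * ((Mᵀ * Λ)⁻¹) := by rw [Matrix.mul_inv_rev]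
    _ = M⁻¹ * (Λ⁻¹ * Mᵀ⁻¹) := by rw [Matrix.mul_inv_rev]
  calc M * Λ⁻¹ * Mᵀ = M * (M⁻¹ * (Λ⁻¹ * Mᵀ⁻¹)) * Mᵀ := by rw [← hinv]
    _ = (M * M⁻¹) * Λ⁻¹ * (Mᵀ⁻¹ * Mᵀ) := by noncomm_ring
    _ = Λ⁻¹ := by
        rw [Matrix.mul_nonsing_inv _ hMdet, Matrix.nonsing_inv_mul _ hMtdet,
          Matrix.one_mul, Matrix.mul_one]

lemma rk_algebra {n s : ℕ} (Λ : Matrix (Fin n) (Fin n) ℝ) (hΛanti : Λᵀ = -Λ)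
    (A : Matrix (Fin s) (Fin s) ℝ) (b : Fin s → ℝ)
    (hsymp : ∀ i j, b i * A i j + b j * A j i = b i * b j) (h : ℝ)
    (S D K : Fin s → Matrix (Fin n) (Fin n) ℝ)
    (hK : ∀ i, (K i)ᵀ = K i)
    (hS : ∀ i, S i = 1 + h • ∑ j, A i j • D j)
    (hΛD : ∀ i, Λ * D i = K i * S i) :
    (1 + h • ∑ j, b j • D j)ᵀ * Λ * (1 + h • ∑ j, b j • D j) = Λ := by
  set T : Matrix (Fin n) (Fin n) ℝ := ∑ j, b j • D j with hT
  have hE0 : ∀ i, (D i)ᵀ * Λ * S i + (S i)ᵀ * Λ * D i = 0 := by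
    intro i
    have h4 : (Λ * D i)ᵀ = (S i)ᵀ * K i := by rw [hΛD i, transpose_mul, hK i]
    have h5 : (Λ * D i)ᵀ = -((D i)ᵀ * Λ) := by
      rw [transpose_mul, hΛanti, Matrix.mul_neg]
    have h2 : (D i)ᵀ * Λ = -((S i)ᵀ * K i) := by rw [← h4, h5, neg_neg]
    have h3 : (S i)ᵀ * Λ * D i = (S i)ᵀ * K i * S i := by
      rw [Matrix.mul_assoc, hΛD i, Matrix.mul_assoc]
    rw [h2, h3]
    noncomm_ring
  have hsum1 : ∑ i, b i • ((D i)ᵀ * Λ * S i)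
      = Tᵀ * Λ + h • ∑ i, ∑ j, (b i * A i j) • ((D i)ᵀ * Λ * D j) := by
    simp only [hS, Matrix.mul_add, Matrix.mul_one, Matrix.mul_smul, Matrix.mul_sum,
      smul_add, smul_smul, Finset.smul_sum, hT, transpose_sum, transpose_smul,
      Matrix.sum_mul, Matrix.smul_mul]
    rw [Finset.sum_add_distrib]
    congr 1
    refine Finset.sum_congr rfl fun i _ => Finset.sum_congr rfl fun j _ => ?_
    congr 1; ring
  have hsum2 : ∑ i, b i • ((S i)ᵀ * Λ * D i)
      = Λ * T + h • ∑ i, ∑ j, (b i * A i j) • ((D j)ᵀ * Λ * D i) := by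
    simp only [hS, transpose_add, transpose_smul, transpose_one, transpose_sum,
      Matrix.add_mul, Matrix.one_mul, Matrix.smul_mul, Matrix.sum_mul,
      smul_add, smul_smul, Finset.smul_sum, hT, Matrix.mul_sum, Matrix.mul_smul]
    rw [Finset.sum_add_distrib]
    congr 1
    refine Finset.sum_congr rfl fun i _ => Finset.sum_congr rfl fun j _ => ?_
    congr 1; ring
  have hTLT : Tᵀ * Λ * T = ∑ i, ∑ j, (b i * b j) • ((D i)ᵀ * Λ * D j) := by
    simp only [hT, transpose_sum, transpose_smul, Matrix.sum_mul, Matrix.smul_mul,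
      Matrix.mul_sum, Matrix.mul_smul, smul_smul, Finset.smul_sum]
    rw [Finset.sum_comm]
    refine Finset.sum_congr rfl fun i _ => Finset.sum_congr rfl fun j _ => ?_
    congr 1; ring
  have hswap : ∑ i, ∑ j, (b i * A i j) • ((D j)ᵀ * Λ * D i)
      = ∑ i, ∑ j, (b j * A j i) • ((D i)ᵀ * Λ * D j) := by
    rw [Finset.sum_comm]
  have hXY : (∑ i, ∑ j, (b i * A i j) • ((D i)ᵀ * Λ * D j))
        + (∑ i, ∑ j, (b j * A j i) • ((D i)ᵀ * Λ * D j))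
      = ∑ i, ∑ j, (b i * b j) • ((D i)ᵀ * Λ * D j) := by
    rw [← Finset.sum_add_distrib]
    refine Finset.sum_congr rfl fun i _ => ?_
    rw [← Finset.sum_add_distrib]
    refine Finset.sum_congr rfl fun j _ => ?_
    rw [← add_smul, hsymp]
  have hcomb : (∑ i, b i • ((D i)ᵀ * Λ * S i)) + (∑ i, b i • ((S i)ᵀ * Λ * D i))
      = Tᵀ * Λ + Λ * T + h • (Tᵀ * Λ * T) := by
    rw [hsum1, hsum2, hswap, hTLT, ← hXY, smul_add]
    abel
  have zero : ∑ i, b i • ((D i)ᵀ * Λ * S i + (S i)ᵀ * Λ * D i) = 0 :=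
    Finset.sum_eq_zero fun i _ => by rw [hE0 i, smul_zero]
  have expand : (1 + h • T)ᵀ * Λ * (1 + h • T)
      = Λ + (h • (Tᵀ * Λ) + h • (Λ * T) + (h * h) • (Tᵀ * Λ * T)) := by
    simp only [transpose_add, transpose_one, transpose_smul, Matrix.add_mul,
      Matrix.mul_add, Matrix.one_mul, Matrix.mul_one, Matrix.smul_mul, Matrix.mul_smul,
      smul_smul]
    module
  have key : h • (Tᵀ * Λ) + h • (Λ * T) + (h * h) • (Tᵀ * Λ * T)
      = h • ∑ i, b i • ((D i)ᵀ * Λ * S i + (S i)ᵀ * Λ * D i) := by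
    have hsplit : ∑ i, b i • ((D i)ᵀ * Λ * S i + (S i)ᵀ * Λ * D i)
        = (∑ i, b i • ((D i)ᵀ * Λ * S i)) + (∑ i, b i • ((S i)ᵀ * Λ * D i)) := by
      rw [← Finset.sum_add_distrib]
      exact Finset.sum_congr rfl fun i _ => smul_add _ _ _
    rw [hsplit, hcomb]
    module
  rw [expand, key, zero, smul_zero, add_zero]

/-- For `α(q) = −(1/2)Λq` with `Λ` constant, invertible and antisymmetric, an invertible
Runge–Kutta matrix `A` whose coefficients satisfy `bᵢaᵢⱼ + bⱼaⱼᵢ = bᵢbⱼ`, and consistent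
momentum `p = −(1/2)Λq`, the Runge–Kutta scheme is a Poisson integrator for the Poisson
system `q̇ = Λ⁻¹∇H(q)` with constant structure matrix `Λ⁻¹`: the induced one-step map
`F_h : q ↦ q̄` satisfies `DF_h(q) Λ⁻¹ DF_h(q)ᵀ = Λ⁻¹`. -/
theorem vrk_is_poisson_integrator
    {n s : ℕ} (hn : Even n)
    (H : (Fin n → ℝ) → ℝ) (hH : ContDiff ℝ (⊤ : ℕ∞) H)
    (Λ : Matrix (Fin n) (Fin n) ℝ) (hΛinv : IsUnit Λ.det) (hΛanti : Λᵀ = -Λ)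
    (A : Matrix (Fin s) (Fin s) ℝ) (b : Fin s → ℝ) (hA : IsUnit A.det)
    (hsymp : ∀ i j, b i * A i j + b j * A j i = b i * b j)
    (h : ℝ) (hh : 0 < h)
    -- the internal stages and the one-step map `F_h : q ↦ q̄`
    (Qs Qd : (Fin n → ℝ) → Fin s → (Fin n → ℝ))
    (F : (Fin n → ℝ) → (Fin n → ℝ))
    (hQsdiff : ∀ i, Differentiable ℝ (fun q => Qs q i))
    (hQddiff : ∀ i, Differentiable ℝ (fun q => Qd q i))
    (hFdiff : Differentiable ℝ F)
    (heq1 : ∀ q i, Λ *ᵥ Qd q i = grad H (Qs q i))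
    (heq2 : ∀ q i, Qs q i = q + h • ∑ j, A i j • Qd q j)
    (heq3 : ∀ q, F q = q + h • ∑ j, b j • Qd q j)
    -- the momenta, on the primary constraint `p = −(1/2)Λq`
    (p : (Fin n → ℝ) → (Fin n → ℝ))
    (hp : ∀ q, p q = -(((1:ℝ)/2) • (Λ *ᵥ q))) :
    ∀ q : Fin n → ℝ, jac F q * Λ⁻¹ * (jac F q)ᵀ = Λ⁻¹ := by
  intro q
  -- stage Jacobians
  set D : Fin s → Matrix (Fin n) (Fin n) ℝ := fun i => jac (fun x => Qd x i) q with hD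
  set S : Fin s → Matrix (Fin n) (Fin n) ℝ := fun i => jac (fun x => Qs x i) q with hSdef
  set K : Fin s → Matrix (Fin n) (Fin n) ℝ := fun i => jac (grad H) (Qs q i) with hKdef
  have hsumdiff : ∀ (c : Fin s → ℝ), DifferentiableAt ℝ (fun x => ∑ j, c j • Qd x j) q :=
    fun c => DifferentiableAt.fun_sum fun j _ => ((hQddiff j) q).const_smul (c j)
  have hjac_sum : ∀ (c : Fin s → ℝ),
      jac (fun x => x + h • ∑ j, c j • Qd x j) q = 1 + h • ∑ j, c j • D j := by
    intro c
    rw [jac_add (fun x => x) (fun x => h • ∑ j, c j • Qd x j) q differentiableAt_fun_id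
      (((hsumdiff c)).const_smul h), jac_id,
      jac_smul h _ q (hsumdiff c),
      jac_sum (fun j => fun x => c j • Qd x j) q
        (fun j => ((hQddiff j) q).const_smul (c j))]
    congr 1
    congr 1
    refine Finset.sum_congr rfl fun j _ => ?_
    rw [jac_smul (c j) _ q ((hQddiff j) q)]
  -- S and jac F in terms of D
  have hS : ∀ i, S i = 1 + h • ∑ j, A i j • D j := by
    intro i
    have : (fun x => Qs x i) = fun x => x + h • ∑ j, A i j • Qd x j :=
      funext fun x => heq2 x i
    rw [hSdef]
    simp only
    rw [this, hjac_sum (fun j => A i j)]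
  have hM : jac F q = 1 + h • ∑ j, b j • D j := by
    have : F = fun x => x + h • ∑ j, b j • Qd x j := funext fun x => heq3 x
    rw [this, hjac_sum b]
  -- the differentiated stage equations
  have hΛD : ∀ i, Λ * D i = K i * S i := by
    intro i
    have he : (fun x => Λ *ᵥ Qd x i) = fun x => grad H (Qs x i) :=
      funext fun x => heq1 x i
    have h1 : jac (fun x => Λ *ᵥ Qd x i) q = Λ * D i :=
      jac_mulVec Λ _ q ((hQddiff i) q)
    have h2 : jac (fun x => grad H (Qs x i)) q = K i * S i :=
      jac_comp (grad H) (fun x => Qs x i) q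
        ((grad_differentiable H hH) (Qs q i)) ((hQsdiff i) q)
    rw [← h1, he, h2]
  have hK : ∀ i, (K i)ᵀ = K i := fun i => hess_symm H hH (Qs q i)
  -- symplecticity of the Jacobian
  have hsymp' : (jac F q)ᵀ * Λ * jac F q = Λ := by
    rw [hM]
    exact rk_algebra Λ hΛanti A b hsymp h S D K hK hS hΛD
  exact flip_symplectic Λ (jac F q) hΛinv hsymp'
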